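/- Let {J_n}_{n≥0} be a stationary ergodic sequence of positive random variables with E[log J_0] < 0, and define the reflected multiplicative process M_{n+1} = max(M_n J_n, 1), M_0 = 1. Then M_n converges in distribution to an almost surely finite random variable M satisfying M =_d sup_{n ≥ 0} Π_n, where Π_0 = 1 and Π_n = ∏_{i=-n}^{-1} J_i. -/

import Mathlib

open MeasureTheory Filter Set Topology

private lemma aux_bdd {Ω : Type*} [MeasurableSpace Ω] (P : Measure Ω) [IsProbabilityMeasure P]
    (σ : Ω → Ω) (hσ : Ergodic σ P) (g : Ω → ℝ) (hgm : Measurable g)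
    (hgi : Integrable g P) (hgneg : ∫ ω, g ω ∂P < 0) :
    ∀ᵐ ω ∂P, BddAbove (Set.range fun n => ∑ i ∈ Finset.range n, g (σ^[i] ω)) := by
  set S : ℕ → Ω → ℝ := fun n ω => ∑ i ∈ Finset.range n, g (σ^[i] ω) with hS
  have hS0 : ∀ ω, S 0 ω = 0 := fun ω => by simp [hS]
  have hSrec : ∀ n ω, S (n + 1) ω = g ω + S n (σ ω) := by
    intro n ω
    simp only [hS]
    rw [Finset.sum_range_succ']
    simp [Function.iterate_succ_apply, add_comm]
  have hSm : ∀ n, Measurable (S n) := fun n =>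
    Finset.measurable_sum _ (fun i _ => hgm.comp (hσ.measurable.iterate i))
  have hSi : ∀ n, Integrable (S n) P := by
    intro n
    apply integrable_finset_sum
    intro i _
    exact ((hσ.toMeasurePreserving.iterate i).integrable_comp hgi.aestronglyMeasurable).2 hgi
  set U : ℕ → Ω → ℝ := fun N ω =>
    (Finset.range (N + 1)).sup' Finset.nonempty_range_add_one (fun n => S n ω) with hU
  have hU0 : ∀ N ω, 0 ≤ U N ω := by
    intro N ω
    have h : S 0 ω ≤ U N ω := Finset.le_sup' (fun n => S n ω) (Finset.mem_range.mpr (Nat.succ_pos N))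
    rw [← hS0 ω]
    exact h
  have hUm : ∀ N, Measurable (U N) := by
    intro N
    have h := Finset.measurable_sup' (s := Finset.range (N + 1))
      Finset.nonempty_range_add_one (fun n _ => hSm n)
    have : U N = (Finset.range (N + 1)).sup' Finset.nonempty_range_add_one S := by
      funext ω
      simp [hU, Finset.sup'_apply]
    rw [this]
    exact h
  have hUi : ∀ N, Integrable (U N) P := by
    intro N
    refine Integrable.mono' (g := fun ω => ∑ n ∈ Finset.range (N+1), |S n ω|)
      (integrable_finset_sum _ (fun n _ => (hSi n).abs)) (hUm N).aestronglyMeasurable ?_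
    filter_upwards with ω
    obtain ⟨n₀, hn₀, hval⟩ := Finset.exists_mem_eq_sup' (s := Finset.range (N + 1))
      Finset.nonempty_range_add_one (fun n => S n ω)
    have : U N ω = S n₀ ω := hval
    rw [Real.norm_eq_abs, this]
    exact Finset.single_le_sum (f := fun n => |S n ω|) (fun i _ => abs_nonneg _) hn₀
  have hkey : ∀ N ω, U N ω ≤ max 0 (g ω + U N (σ ω)) := by
    intro N ω
    apply Finset.sup'_le
    intro n hn
    match n with
    | 0 =>
      have : S 0 ω = 0 := hS0 ω
      rw [this]
      exact le_max_left 0 (g ω + U N (σ ω))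
    | (m+1) =>
      have hm : m ∈ Finset.range (N + 1) := by
        simp only [Finset.mem_range] at hn ⊢; omega
      have h1 : S m (σ ω) ≤ U N (σ ω) := Finset.le_sup' (fun n => S n (σ ω)) hm
      have h2 : S (m + 1) ω = g ω + S m (σ ω) := hSrec m ω
      rw [h2]
      exact le_max_of_le_right (by linarith)
  set A : ℕ → Set Ω := fun N => {ω | 0 < U N ω} with hA
  have hAms : ∀ N, MeasurableSet (A N) := fun N => measurableSet_lt measurable_const (hUm N)
  have hUσi : ∀ N, Integrable (fun ω => U N (σ ω)) P := fun N =>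
    (hσ.toMeasurePreserving.integrable_comp (hUm N).aestronglyMeasurable).2 (hUi N)
  have hineq : ∀ N, 0 ≤ ∫ ω in A N, g ω ∂P := by
    intro N
    set F : Ω → ℝ := fun ω => U N ω - U N (σ ω) with hF
    have hFi : Integrable F P := (hUi N).sub (hUσi N)
    have h1 : ∫ ω in A N, F ω ∂P ≤ ∫ ω in A N, g ω ∂P := by
      refine setIntegral_mono_on hFi.integrableOn hgi.integrableOn (hAms N) ?_
      intro ω hω
      have h2 := (le_max_iff.mp (hkey N ω)).resolve_left (not_le.mpr hω)
      simp only [hF]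
      linarith
    have h2 : ∫ ω in (A N)ᶜ, F ω ∂P ≤ 0 := by
      refine setIntegral_nonpos (hAms N).compl ?_
      intro ω hω
      have h3 : ¬ (0 < U N ω) := hω
      have h4 := hU0 N (σ ω)
      have h5 := hU0 N ω
      push_neg at h3
      simp only [hF]
      linarith
    have h3 : ∫ ω, F ω ∂P = 0 := by
      have hmap : Measure.map σ P = P := hσ.toMeasurePreserving.map_eq
      have hint2 : ∫ ω, U N ω ∂(Measure.map σ P) = ∫ ω, U N (σ ω) ∂P :=
        integral_map hσ.measurable.aemeasurable
          (by rw [hmap]; exact (hUm N).aestronglyMeasurable)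
      rw [hmap] at hint2
      simp only [hF]
      rw [integral_sub (hUi N) (hUσi N), ← hint2, sub_self]
    have h4 := integral_add_compl (hAms N) hFi
    have h5 : 0 ≤ ∫ ω in A N, F ω ∂P := by
      have h6 : ∫ ω in A N, F ω ∂P + ∫ ω in (A N)ᶜ, F ω ∂P = 0 := by
        rw [h4, h3]
      linarith
    linarith
  have hUmono : ∀ {N M : ℕ}, N ≤ M → ∀ ω, U N ω ≤ U M ω := by
    intro N M hNM ω
    apply Finset.sup'_le
    intro n hn
    exact Finset.le_sup' (fun n => S n ω) (Finset.range_subset_range.mpr (by omega) hn)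
  have hAmono : Monotone A := fun N M hNM ω hω => lt_of_lt_of_le hω (hUmono hNM ω)
  have hlim : Tendsto (fun N => ∫ ω in A N, g ω ∂P) atTop
      (𝓝 (∫ ω in ⋃ N, A N, g ω ∂P)) := by
    have h1 : ∀ N, ∫ ω in A N, g ω ∂P = ∫ ω, (A N).indicator g ω ∂P := fun N =>
      (integral_indicator (hAms N)).symm
    have h2 : ∫ ω in ⋃ N, A N, g ω ∂P = ∫ ω, (⋃ N, A N).indicator g ω ∂P :=
      (integral_indicator (MeasurableSet.iUnion hAms)).symm
    simp only [h1, h2]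
    refine tendsto_integral_of_dominated_convergence (fun ω => ‖g ω‖)
      (fun N => (hgm.indicator (hAms N)).aestronglyMeasurable) hgi.norm
      (fun N => Filter.Eventually.of_forall (fun ω => norm_indicator_le_norm_self _ _)) ?_
    filter_upwards with ω
    by_cases hω : ω ∈ ⋃ N, A N
    · obtain ⟨N₀, hN₀⟩ := Set.mem_iUnion.mp hω
      refine Tendsto.congr' ?_ tendsto_const_nhds
      filter_upwards [eventually_ge_atTop N₀] with N hN
      rw [Set.indicator_of_mem hω, Set.indicator_of_mem (hAmono hN hN₀)]
    · have h3 : ∀ N, ω ∉ A N := fun N hN => hω (Set.mem_iUnion.mpr ⟨N, hN⟩)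
      simp only [Set.indicator_of_notMem hω, Set.indicator_of_notMem (h3 _)]
      exact tendsto_const_nhds
  have h0le : 0 ≤ ∫ ω in ⋃ N, A N, g ω ∂P := ge_of_tendsto' hlim hineq
  set B : Set Ω := {ω | BddAbove (Set.range fun n => S n ω)} with hB
  have hBeq : B = ⋃ c : ℕ, ⋂ n : ℕ, {ω | S n ω ≤ (c : ℝ)} := by
    ext ω
    simp only [hB, Set.mem_setOf_eq, Set.mem_iUnion, Set.mem_iInter]
    constructor
    · rintro ⟨c, hc⟩
      obtain ⟨m, hm⟩ := exists_nat_ge c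
      exact ⟨m, fun n => le_trans (hc ⟨n, rfl⟩) hm⟩
    · rintro ⟨c, hc⟩
      exact ⟨c, by rintro x ⟨n, rfl⟩; exact hc n⟩
  have hBms : MeasurableSet B := by
    rw [hBeq]
    exact MeasurableSet.iUnion fun c => MeasurableSet.iInter fun n =>
      measurableSet_le (hSm n) measurable_const
  have hBinv : σ ⁻¹' Bᶜ = Bᶜ := by
    suffices h : ∀ ω, (BddAbove (Set.range fun n => S n (σ ω)) ↔
        BddAbove (Set.range fun n => S n ω)) by
      ext ω
      simp only [Set.mem_preimage, Set.mem_compl_iff, hB, Set.mem_setOf_eq]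
      exact not_congr (h ω)
    intro ω
    constructor
    · rintro ⟨c, hc⟩
      refine ⟨max 0 (g ω + c), ?_⟩
      rintro x ⟨n, rfl⟩
      match n with
      | 0 =>
        have : S 0 ω = 0 := hS0 ω
        show S 0 ω ≤ _
        rw [this]
        exact le_max_left _ _
      | (m+1) =>
        show S (m + 1) ω ≤ _
        rw [hSrec m ω]
        exact le_max_of_le_right (by linarith [hc ⟨m, rfl⟩])
    · rintro ⟨c, hc⟩
      refine ⟨c - g ω, ?_⟩
      rintro x ⟨n, rfl⟩
      have h1 : S (n + 1) ω ≤ c := hc ⟨n + 1, rfl⟩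
      rw [hSrec n ω] at h1
      show S n (σ ω) ≤ _
      linarith
  rcases hσ.ae_empty_or_univ hBms.compl hBinv with h | h
  · rw [ae_iff]
    have h1 : {ω | ¬ BddAbove (Set.range fun n => S n ω)} = Bᶜ := rfl
    rw [h1]
    simpa using measure_congr h
  · exfalso
    have hsub : (⋃ N, A N)ᶜ ⊆ B := by
      intro ω hω
      simp only [Set.mem_compl_iff, Set.mem_iUnion, not_exists, hA, Set.mem_setOf_eq,
        not_lt] at hω
      refine ⟨0, ?_⟩
      rintro x ⟨n, rfl⟩
      calc S n ω ≤ U n ω := Finset.le_sup' (fun m => S m ω) (Finset.self_mem_range_succ n)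
      _ ≤ 0 := hω n
    have h2 : P Bᶜ = 1 := by simpa using measure_congr h
    have hBc0 : P B = 0 := (prob_compl_eq_one_iff hBms).mp h2
    have hUc0 : P ((⋃ N, A N)ᶜ) = 0 := measure_mono_null hsub hBc0
    have h5 : ∫ ω in ⋃ N, A N, g ω ∂P = ∫ ω, g ω ∂P := by
      have h6 := integral_add_compl (MeasurableSet.iUnion hAms) hgi
      have h7 : ∫ ω in (⋃ N, A N)ᶜ, g ω ∂P = 0 := by
        rw [Measure.restrict_eq_zero.mpr hUc0]
        exact integral_zero_measure _
      linarith
    rw [h5] at h0le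
    linarith

open MeasureTheory Filter Set Topology

theorem stmt12 {Ω : Type*} [MeasurableSpace Ω] (P : Measure Ω) [IsProbabilityMeasure P]
    (T T' : Ω → Ω) (hT : Ergodic T P) (hT' : MeasurePreserving T' P P)
    (hTT' : Function.LeftInverse T' T) (hT'T : Function.RightInverse T' T)
    (f : Ω → ℝ) (hf : ∀ ω, 0 < f ω) (hfm : Measurable f)
    (hint : Integrable (fun ω => Real.log (f ω)) P)
    (hneg : ∫ ω, Real.log (f ω) ∂P < 0)
    (M : ℕ → Ω → ℝ) (hM0 : ∀ ω, M 0 ω = 1)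
    (hMrec : ∀ (n : ℕ) ω, M (n + 1) ω = max (M n ω * f (T^[n] ω)) 1)
    (Pn : ℕ → Ω → ℝ) (hPn : ∀ (n : ℕ) ω, Pn n ω = ∏ i ∈ Finset.range n, f (T'^[i + 1] ω)) :
    (∀ᵐ ω ∂P, BddAbove (Set.range fun n => Pn n ω)) ∧
    ∀ x : ℝ, Filter.Tendsto (fun n => P {ω | x < M n ω}) Filter.atTop
      (nhds (P {ω | x < ⨆ n, Pn n ω})) := by
  have hTm : Measurable T := hT.measurable
  have hT'm : Measurable T' := hT'.measurable
  let e : Ω ≃ᵐ Ω := ⟨⟨T', T, hT'T, hTT'⟩, hT'm, hTm⟩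
  have hT'emb : MeasurableEmbedding T' := e.measurableEmbedding
  have hT'erg : Ergodic T' P := ⟨hT', ⟨fun s hs hTs => by
    refine hT.aeconst_set hs ?_
    calc T ⁻¹' s = T ⁻¹' (T' ⁻¹' s) := by rw [hTs]
    _ = (T' ∘ T) ⁻¹' s := rfl
    _ = s := by rw [hTT'.comp_eq_id, Set.preimage_id]⟩⟩
  set g : Ω → ℝ := fun ω => Real.log (f (T' ω)) with hg
  have hgm : Measurable g := Real.measurable_log.comp (hfm.comp hT'm)
  have hgi : Integrable g P := (hT'.integrable_comp hint.aestronglyMeasurable).2 hint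
  have hgneg : ∫ ω, g ω ∂P < 0 := by
    have h := hT'.integral_comp hT'emb (fun ω => Real.log (f ω))
    rw [hg]
    rw [show (fun ω => Real.log (f (T' ω))) = fun ω => (fun ω => Real.log (f ω)) (T' ω) from rfl]
    rw [h]
    exact hneg
  have hbd := aux_bdd P T' hT'erg g hgm hgi hgneg
  have hPn_eq : ∀ n ω, Pn n ω = Real.exp (∑ i ∈ Finset.range n, g (T'^[i] ω)) := by
    intro n ω
    rw [hPn, Real.exp_sum]
    refine Finset.prod_congr rfl (fun i _ => ?_)
    rw [hg]
    rw [Real.exp_log (hf _)]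
    rw [Function.iterate_succ_apply']
  have part1 : ∀ᵐ ω ∂P, BddAbove (Set.range fun n => Pn n ω) := by
    filter_upwards [hbd] with ω hω
    obtain ⟨c, hc⟩ := hω
    refine ⟨Real.exp c, ?_⟩
    rintro y ⟨n, rfl⟩
    show Pn n ω ≤ Real.exp c
    rw [hPn_eq]
    exact Real.exp_le_exp.mpr (hc ⟨n, rfl⟩)
  refine ⟨part1, fun x => ?_⟩
  -- running maximum of Pn
  set Q : ℕ → Ω → ℝ := fun n ω =>
    (Finset.range (n + 1)).sup' Finset.nonempty_range_add_one (fun k => Pn k ω) with hQ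
  -- M representation
  have hMrep : ∀ n ω, M n ω = (Finset.range (n + 1)).sup' Finset.nonempty_range_add_one
      (fun k => ∏ i ∈ Finset.Ico k n, f (T^[i] ω)) := by
    intro n
    induction n with
    | zero => intro ω; simp [hM0]
    | succ n ih =>
      intro ω
      rw [hMrec, ih ω]
      have hpos : (0:ℝ) ≤ f (T^[n] ω) := (hf _).le
      rw [Finset.comp_sup'_eq_sup'_comp (γ := ℝ) Finset.nonempty_range_add_one
        (fun y => y * f (T^[n] ω)) (fun a b => max_mul_of_nonneg a b hpos)]
      have h1 : ∀ k ∈ Finset.range (n + 1),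
          ((fun y => y * f (T^[n] ω)) ∘ (fun k => ∏ i ∈ Finset.Ico k n, f (T^[i] ω))) k
            = ∏ i ∈ Finset.Ico k (n + 1), f (T^[i] ω) := by
        intro k hk
        have hk' : k ≤ n := by simpa [Nat.lt_succ_iff] using hk
        simp only [Function.comp]
        rw [Finset.prod_Ico_succ_top hk']
      rw [Finset.sup'_congr Finset.nonempty_range_add_one rfl h1]
      apply le_antisymm
      · rw [max_le_iff]
        constructor
        · apply Finset.sup'_le
          intro k hk
          refine Finset.le_sup' (fun k => ∏ i ∈ Finset.Ico k (n + 1), f (T^[i] ω)) ?_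
          exact Finset.mem_range.mpr (by simp only [Finset.mem_range] at hk; omega)
        · have : (1:ℝ) = ∏ i ∈ Finset.Ico (n+1) (n+1), f (T^[i] ω) := by simp
          rw [this]
          exact Finset.le_sup' (fun k => ∏ i ∈ Finset.Ico k (n + 1), f (T^[i] ω)) (Finset.self_mem_range_succ (n+1))
      · apply Finset.sup'_le
        intro k hk
        rcases Nat.lt_succ_iff_lt_or_eq.mp (Finset.mem_range.mp hk) with h | h
        · refine le_max_of_le_left ?_
          exact Finset.le_sup' (fun k => ∏ i ∈ Finset.Ico k (n + 1), f (T^[i] ω))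
            (Finset.mem_range.mpr h)
        · subst h
          simp
  -- iterate identity
  have hiter : ∀ j n, j ≤ n → ∀ ω, T'^[j] (T^[n] ω) = T^[n - j] ω := by
    intro j n hjn ω
    have h1 : T^[n] ω = T^[j] (T^[n - j] ω) := by
      rw [← Function.iterate_add_apply]
      congr 1
      omega
    rw [h1, (hTT'.iterate j) (T^[n - j] ω)]
  have hPnT : ∀ k n, k ≤ n → ∀ ω, Pn k (T^[n] ω) = ∏ i ∈ Finset.Ico (n - k) n, f (T^[i] ω) := by
    intro k n hkn ω
    rw [hPn]
    have h1 : ∀ i ∈ Finset.range k, f (T'^[i + 1] (T^[n] ω)) = f (T^[n - 1 - i] ω) := by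
      intro i hi
      have hik : i < k := Finset.mem_range.mp hi
      rw [hiter (i + 1) n (by omega)]
      have h3 : n - (i + 1) = n - 1 - i := by omega
      rw [h3]
    rw [Finset.prod_congr rfl h1, Finset.prod_Ico_eq_prod_range]
    have h2 : n - (n - k) = k := by omega
    rw [h2, ← Finset.prod_range_reflect (fun j => f (T^[n - k + j] ω)) k]
    refine Finset.prod_congr rfl (fun j hj => ?_)
    have hjk : j < k := Finset.mem_range.mp hj
    have h3 : n - k + (k - 1 - j) = n - 1 - j := by omega
    rw [h3]
  have hQT : ∀ n ω, Q n (T^[n] ω) = M n ω := by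
    intro n ω
    rw [hMrep, hQ]
    apply le_antisymm
    · apply Finset.sup'_le
      intro k hk
      have hk' : k ≤ n := by simpa [Nat.lt_succ_iff] using hk
      rw [hPnT k n hk']
      exact Finset.le_sup' (fun j => ∏ i ∈ Finset.Ico j n, f (T^[i] ω))
        (Finset.mem_range.mpr (show n - k < n + 1 by omega))
    · apply Finset.sup'_le
      intro k hk
      have hk' : k ≤ n := by simpa [Nat.lt_succ_iff] using hk
      have h1 := hPnT (n - k) n (by omega) ω
      have h2 : n - (n - k) = k := by omega
      rw [h2] at h1
      rw [← h1]
      exact Finset.le_sup' (fun m => Pn m (T^[n] ω))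
        (Finset.mem_range.mpr (show n - k < n + 1 by omega))
  -- measurability
  have hPm : ∀ k, Measurable (Pn k) := by
    intro k
    have h1 : Pn k = fun ω => ∏ i ∈ Finset.range k, f (T'^[i + 1] ω) := funext (hPn k)
    rw [h1]
    exact Finset.measurable_prod _ (fun i _ => hfm.comp (hT'm.iterate (i + 1)))
  have hQm : ∀ n, Measurable (Q n) := by
    intro n
    have h := Finset.measurable_sup' (s := Finset.range (n + 1))
      Finset.nonempty_range_add_one (fun k _ => hPm k)
    have h2 : Q n = (Finset.range (n + 1)).sup' Finset.nonempty_range_add_one Pn := by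
      funext ω
      simp [hQ, Finset.sup'_apply]
    rw [h2]
    exact h
  set B : ℕ → Set Ω := fun n => {ω | x < Q n ω} with hB
  have hBms : ∀ n, MeasurableSet (B n) := fun n => measurableSet_lt measurable_const (hQm n)
  have hBmono : Monotone B := by
    intro n m hnm ω hω
    simp only [hB, Set.mem_setOf_eq] at hω ⊢
    refine lt_of_lt_of_le hω ?_
    apply Finset.sup'_le
    intro k hk
    exact Finset.le_sup' (fun k => Pn k ω) (Finset.range_subset_range.mpr (by omega) hk)
  have hmeas_eq : ∀ n, P {ω | x < M n ω} = P (B n) := by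
    intro n
    have h1 : {ω | x < M n ω} = T^[n] ⁻¹' (B n) := by
      ext ω
      simp only [Set.mem_setOf_eq, Set.mem_preimage, hB, hQT n ω]
    rw [h1]
    exact (hT.toMeasurePreserving.iterate n).measure_preimage (hBms n).nullMeasurableSet
  have hUnion : Tendsto (fun n => P (B n)) atTop (𝓝 (P (⋃ n, B n))) :=
    tendsto_measure_iUnion_atTop hBmono
  have hae : P (⋃ n, B n) = P {ω | x < ⨆ n, Pn n ω} := by
    apply measure_congr
    rw [Filter.eventuallyEq_set]
    filter_upwards [part1] with ω hb
    simp only [Set.mem_iUnion, hB, Set.mem_setOf_eq]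
    constructor
    · rintro ⟨n, hn⟩
      obtain ⟨k, hk, hval⟩ := Finset.exists_mem_eq_sup' (s := Finset.range (n + 1))
        Finset.nonempty_range_add_one (fun k => Pn k ω)
      have h1 : Q n ω = Pn k ω := hval
      rw [h1] at hn
      exact lt_of_lt_of_le hn (le_ciSup hb k)
    · intro hlt
      obtain ⟨k, hk⟩ := exists_lt_of_lt_ciSup hlt
      exact ⟨k, lt_of_lt_of_le hk (Finset.le_sup' (fun m => Pn m ω)
        (Finset.self_mem_range_succ k))⟩
  rw [← hae]
  refine hUnion.congr (fun n => (hmeas_eq n).symm)
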